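/- Let n, m be natural numbers and E : Fin m → Finset (Fin n × Fin n) a family of edge sets on the vertex set Fin n. Let V' = Fin n ⊕ (Fin m × (Fin n × Fin n) × Bool) be the vertex set extended by two new vertices for each j ∈ Fin m and each pair e ∈ E j. Then the following are equivalent: (i) there exists a 2-coloring c : Fin n → Bool such that for every j ∈ Fin m some pair (u,v) ∈ E j satisfies c u ≠ c v; (ii) there exists a 2-coloring c' : V' → Bool such that for every j ∈ Fin m and every pair e = (u,v) ∈ E j one has c' (inl u) ≠ c' (inr (j, e, false)) and c' (inl v) ≠ c' (inr (j, e, true)), and for every j ∈ Fin m there exists a pair e ∈ E j with c' (inr (j, e, false)) ≠ c' (inr (j, e, true)). -/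
import Mathlib


/-- The edge-subdivision reduction making a union-closure 2-COL instance repetition free
preserves solvability: the original instance `E` has a 2-coloring with a bichromatic pair
in each `E j` iff the subdivided instance on the extended vertex set does. -/
theorem twoCol_subdivision_equiv (n m : ℕ) (E : Fin m → Finset (Fin n × Fin n)) :
    (∃ c : Fin n → Bool, ∀ j : Fin m, ∃ e ∈ E j, c e.1 ≠ c e.2) ↔
      (∃ c' : (Fin n ⊕ (Fin m × (Fin n × Fin n) × Bool)) → Bool,
        (∀ j : Fin m, ∀ e ∈ E j,
          c' (Sum.inl e.1) ≠ c' (Sum.inr (j, e, false)) ∧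
          c' (Sum.inl e.2) ≠ c' (Sum.inr (j, e, true))) ∧
        (∀ j : Fin m, ∃ e ∈ E j,
          c' (Sum.inr (j, e, false)) ≠ c' (Sum.inr (j, e, true)))) := by
  constructor
  · rintro ⟨c, hc⟩
    refine ⟨Sum.elim c (fun p => if p.2.2 then !c p.2.1.2 else !c p.2.1.1), ?_, ?_⟩
    · intro j e _
      constructor <;> simp
    · intro j
      obtain ⟨e, he, hne⟩ := hc j
      exact ⟨e, he, by simpa using hne⟩
  · rintro ⟨c', h1, h2⟩
    refine ⟨fun v => c' (Sum.inl v), fun j => ?_⟩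
    obtain ⟨e, he, hne⟩ := h2 j
    obtain ⟨ha, hb⟩ := h1 j e he
    refine ⟨e, he, fun h => hne ?_⟩
    simp only [ne_eq] at ha hb h
    cases h1 : c' (Sum.inl e.1) <;> cases h2 : c' (Sum.inl e.2) <;>
      cases h3 : c' (Sum.inr (j, e, false)) <;> cases h4 : c' (Sum.inr (j, e, true)) <;>
      simp_all
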